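/- Let V be a real vector space and let Σ, M : V × V → ℝ be symmetric positive definite bilinear forms. Then for F, G ∈ V, the sectional expression K(F,G) := Σ(F,F)·M(G,G) − 2·Σ(F,G)·M(F,G) + Σ(G,G)·M(F,F) equals zero if and only if F and G are linearly dependent. -/
import Mathlib


/-- For symmetric positive definite bilinear forms `S` (Σ) and `M` on a real
vector space `V`, the Kulkarni–Nomizu sectional expression
`K(F,G) = Σ(F,F)·M(G,G) − 2·Σ(F,G)·M(F,G) + Σ(G,G)·M(F,F)` vanishes if and only if
`F` and `G` are linearly dependent. -/
theorem kulkarni_nomizu_sectional_eq_zero_iff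
    (V : Type*) [AddCommGroup V] [Module ℝ V]
    (S M : V →ₗ[ℝ] V →ₗ[ℝ] ℝ)
    (hSsymm : ∀ x y : V, S x y = S y x)
    (hMsymm : ∀ x y : V, M x y = M y x)
    (hSpd : ∀ x : V, x ≠ 0 → 0 < S x x)
    (hMpd : ∀ x : V, x ≠ 0 → 0 < M x x)
    (F G : V) :
    S F F * M G G - 2 * S F G * M F G + S G G * M F F = 0 ↔
      ¬ LinearIndependent ℝ ![F, G] := by
  constructor
  · intro hK hind
    rw [LinearIndependent.pair_iff] at hind
    have hG : G ≠ 0 := by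
      intro h
      rcases hind 0 1 (by simp [h]) with ⟨_, h1⟩
      exact one_ne_zero h1
    have hSGG : 0 < S G G := hSpd G hG
    set t : ℝ := S F G / S G G with ht
    set F' : V := F - t • G with hF'
    have hF'ne : F' ≠ 0 := by
      intro h
      have hFG : F = t • G := by
        have := sub_eq_zero.mp h
        simpa using this
      rcases hind 1 (-t) (by rw [hFG]; simp) with ⟨h1, _⟩
      exact one_ne_zero h1
    have hkey : S F F * M G G - 2 * S F G * M F G + S G G * M F F
        = S F' F' * M G G + S G G * M F' F' := by
      have e1 : S F' F' = S F F - 2 * t * S F G + t ^ 2 * S G G := by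
        simp only [hF', map_sub, map_smul, LinearMap.sub_apply, LinearMap.smul_apply,
          smul_eq_mul, hSsymm G F]
        ring
      have e2 : M F' F' = M F F - 2 * t * M F G + t ^ 2 * M G G := by
        simp only [hF', map_sub, map_smul, LinearMap.sub_apply, LinearMap.smul_apply,
          smul_eq_mul, hMsymm G F]
        ring
      rw [e1, e2, ht]
      field_simp
      ring
    have h1 : 0 < S F' F' * M G G := mul_pos (hSpd F' hF'ne) (hMpd G hG)
    have h2 : 0 < S G G * M F' F' := mul_pos hSGG (hMpd F' hF'ne)
    rw [hkey] at hK
    linarith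
  · intro hind
    rw [LinearIndependent.pair_iff] at hind
    push_neg at hind
    obtain ⟨s, u, hsum, hne⟩ := hind
    rcases eq_or_ne s 0 with hs | hs
    · have hu : u ≠ 0 := by tauto
      have hG : G = (-(s/u)) • F := by
        have : u • G = -(s • F) := by
          rw [eq_neg_iff_add_eq_zero, add_comm]; exact hsum
        have := congrArg (fun v => (u⁻¹ : ℝ) • v) this
        simp only [smul_smul, inv_mul_cancel₀ hu, one_smul, smul_neg] at this
        rw [this, ← neg_smul]; congr 1; field_simp
      rw [hG]
      simp only [map_smul, LinearMap.smul_apply, smul_eq_mul, hSsymm F, hMsymm F]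
      ring
    · have hF : F = (-(u/s)) • G := by
        have : s • F = -(u • G) := by
          rw [eq_neg_iff_add_eq_zero]; exact hsum
        have := congrArg (fun v => (s⁻¹ : ℝ) • v) this
        simp only [smul_smul, inv_mul_cancel₀ hs, one_smul, smul_neg] at this
        rw [this, ← neg_smul]; congr 1; field_simp
      rw [hF]
      simp only [map_smul, LinearMap.smul_apply, smul_eq_mul, hSsymm G, hMsymm G]
      ring
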